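/- For the polynomials X^z_y of Proposition 1.2, one has X^z_y = ξ(T_y a_z), where ξ : M → ℤ[u,u⁻¹] is the A-linear functional with ξ(a_z) = δ_{z,1} and M is the Lusztig–Vogan module. -/

import Mathlib

open Polynomial LaurentPolynomial
open scoped Classical

/-- The characterization (Proposition 1.2) of the polynomials `X^z_y ∈ ℤ[u]`, indexed by pairs
`(z, y)` with `z` a twisted involution (`st z = z⁻¹`) and `y ∈ W`: `X^z_1 = δ_{z,1}`, and for
`s ∈ S`, `y > ys`, the recursions 1.2(i)–(iv) hold. -/
def XRec {B W : Type} [Group W] {M : CoxeterMatrix B} (cs : CoxeterSystem M W)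
    (st : W ≃* W) (P : {z : W // st z = z⁻¹} → W → Polynomial ℤ) : Prop :=
  (∀ z : {z : W // st z = z⁻¹}, P z 1 = if z.1 = 1 then 1 else 0) ∧
  ∀ (i : B) (y : W), cs.length (y * cs.simple i) < cs.length y →
    ∀ z : {z : W // st z = z⁻¹},
      (cs.simple i * z.1 = z.1 * st (cs.simple i) →
        cs.length z.1 < cs.length (cs.simple i * z.1) →
        ∀ h : st (cs.simple i * z.1) = (cs.simple i * z.1)⁻¹,
          P z y = X * P z (y * cs.simple i) +
            (X + 1) * P ⟨cs.simple i * z.1, h⟩ (y * cs.simple i)) ∧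
      (cs.simple i * z.1 = z.1 * st (cs.simple i) →
        cs.length (cs.simple i * z.1) < cs.length z.1 →
        ∀ h : st (cs.simple i * z.1) = (cs.simple i * z.1)⁻¹,
          P z y = (X ^ 2 - X - 1) * P z (y * cs.simple i) +
            (X ^ 2 - X) * P ⟨cs.simple i * z.1, h⟩ (y * cs.simple i)) ∧
      (cs.simple i * z.1 ≠ z.1 * st (cs.simple i) →
        cs.length z.1 < cs.length (cs.simple i * z.1) →
        ∀ h : st (cs.simple i * z.1 * st (cs.simple i)) =
            (cs.simple i * z.1 * st (cs.simple i))⁻¹,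
          P z y = P ⟨cs.simple i * z.1 * st (cs.simple i), h⟩ (y * cs.simple i)) ∧
      (cs.simple i * z.1 ≠ z.1 * st (cs.simple i) →
        cs.length (cs.simple i * z.1) < cs.length z.1 →
        ∀ h : st (cs.simple i * z.1 * st (cs.simple i)) =
            (cs.simple i * z.1 * st (cs.simple i))⁻¹,
          P z y = (X ^ 2 - 1) * P z (y * cs.simple i) +
            X ^ 2 * P ⟨cs.simple i * z.1 * st (cs.simple i), h⟩ (y * cs.simple i))

/-- The Lusztig–Vogan formulas 1.1(i)–(iv) for the action of the generators `T_s` of the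
Iwahori–Hecke algebra (with parameter `u²`) on the free `ℤ[u,u⁻¹]`-module with basis
`a_z` indexed by the twisted involutions `z` (`st z = z⁻¹`). -/
def LVFormulas {B W : Type} [Group W] {M : CoxeterMatrix B} (cs : CoxeterSystem M W)
    (st : W ≃* W) {Mo : Type} [AddCommGroup Mo] [Module (LaurentPolynomial ℤ) Mo]
    (a : {w : W // st w = w⁻¹} → Mo)
    (Ts : B → Mo →ₗ[LaurentPolynomial ℤ] Mo) : Prop :=
  ∀ (i : B) (z : {w : W // st w = w⁻¹}),
    (cs.simple i * z.1 = z.1 * st (cs.simple i) →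
      cs.length z.1 < cs.length (cs.simple i * z.1) →
      ∀ h : st (cs.simple i * z.1) = (cs.simple i * z.1)⁻¹,
        Ts i (a z) = (T 1 : LaurentPolynomial ℤ) • a z + ((T 1 + 1 : LaurentPolynomial ℤ)) • a ⟨cs.simple i * z.1, h⟩) ∧
    (cs.simple i * z.1 = z.1 * st (cs.simple i) →
      cs.length (cs.simple i * z.1) < cs.length z.1 →
      ∀ h : st (cs.simple i * z.1) = (cs.simple i * z.1)⁻¹,
        Ts i (a z) = ((T 1 ^ 2 - T 1 - 1 : LaurentPolynomial ℤ)) • a z + ((T 1 ^ 2 - T 1 : LaurentPolynomial ℤ)) • a ⟨cs.simple i * z.1, h⟩) ∧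
    (cs.simple i * z.1 ≠ z.1 * st (cs.simple i) →
      cs.length z.1 < cs.length (cs.simple i * z.1) →
      ∀ h : st (cs.simple i * z.1 * st (cs.simple i)) =
          (cs.simple i * z.1 * st (cs.simple i))⁻¹,
        Ts i (a z) = a ⟨cs.simple i * z.1 * st (cs.simple i), h⟩) ∧
    (cs.simple i * z.1 ≠ z.1 * st (cs.simple i) →
      cs.length (cs.simple i * z.1) < cs.length z.1 →
      ∀ h : st (cs.simple i * z.1 * st (cs.simple i)) =
          (cs.simple i * z.1 * st (cs.simple i))⁻¹,
        Ts i (a z) = ((T 1 ^ 2 - 1 : LaurentPolynomial ℤ)) • a z + ((T 1 ^ 2 : LaurentPolynomial ℤ)) • a ⟨cs.simple i * z.1 * st (cs.simple i), h⟩)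

/-- The polynomials `X^z_y` of Proposition 1.2 satisfy `X^z_y = ξ(T_y a_z)`,
where `ξ` is the `A`-linear functional on the Lusztig–Vogan module with `ξ(a_z) = δ_{z,1}`. -/
theorem statement6 {B W : Type} [Group W] [Finite B] {M : CoxeterMatrix B}
    (cs : CoxeterSystem M W) (st : W ≃* W)
    (hst_inv : ∀ w, st (st w) = w)
    (hst_S : ∀ i : B, ∃ j : B, st (cs.simple i) = cs.simple j)
    (P : {z : W // st z = z⁻¹} → W → Polynomial ℤ) (hP : XRec cs st P)
    (Mo : Type) [AddCommGroup Mo] [Module (LaurentPolynomial ℤ) Mo]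
    (a : Module.Basis {w : W // st w = w⁻¹} (LaurentPolynomial ℤ) Mo)
    (Tact : W → (Mo →ₗ[LaurentPolynomial ℤ] Mo))
    (hTact1 : Tact 1 = LinearMap.id)
    (hTactmul : ∀ w w' : W, cs.length (w * w') = cs.length w + cs.length w' →
      Tact (w * w') = (Tact w) ∘ₗ (Tact w'))
    (hTacts : LVFormulas cs st a (fun i => Tact (cs.simple i)))
    (ξ : Mo →ₗ[LaurentPolynomial ℤ] LaurentPolynomial ℤ)
    (hξ : ∀ z : {w : W // st w = w⁻¹}, ξ (a z) = if z.1 = 1 then 1 else 0) :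
    ∀ (z : {w : W // st w = w⁻¹}) (y : W),
      Polynomial.toLaurent (P z y) = ξ (Tact y (a z)) := by

  have key1 : ∀ (st : W ≃* W) (z : W) (i : B), st z = z⁻¹ →
      cs.simple i * z = z * st (cs.simple i) →
      st (cs.simple i * z) = (cs.simple i * z)⁻¹ := by
    intro st z i hz hc
    have h1 : st (cs.simple i) = z⁻¹ * (cs.simple i * z) := by
      rw [hc, ← mul_assoc, inv_mul_cancel, one_mul]
    simp [map_mul, hz, mul_inv_rev, cs.inv_simple, h1, mul_assoc]
  have key2 : ∀ (z : W) (i : B), st z = z⁻¹ →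
      st (cs.simple i * z * st (cs.simple i)) = (cs.simple i * z * st (cs.simple i))⁻¹ := by
    intro z i hz
    obtain ⟨j, hj⟩ := hst_S i
    have hji : st (cs.simple j) = cs.simple i := by rw [← hj, hst_inv]
    simp [map_mul, hz, mul_inv_rev, cs.inv_simple, hj, hji, mul_assoc]
  suffices H : ∀ (n : ℕ) (y : W), cs.length y = n →
      ∀ z : {w : W // st w = w⁻¹}, Polynomial.toLaurent (P z y) = ξ (Tact y (a z)) by
    intro z y; exact H (cs.length y) y rfl z
  intro n
  induction n using Nat.strong_induction_on with
  | _ n ih =>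
    intro y hy z
    rcases eq_or_ne y 1 with rfl | hy1
    · rw [hP.1, hTact1]
      simp only [LinearMap.id_coe, id_eq, hξ]
      split_ifs <;> simp
    · obtain ⟨i, hd⟩ := cs.exists_rightDescent_of_ne_one hy1
      have hd' : cs.length (y * cs.simple i) + 1 = cs.length y := cs.isRightDescent_iff.mp hd
      set y' := y * cs.simple i with hy'
      have hyy' : y = y' * cs.simple i := by
        rw [hy', mul_assoc, cs.simple_mul_simple_self, mul_one]
      have hlt : cs.length y' < n := by omega
      have hmul : Tact y = (Tact y') ∘ₗ (Tact (cs.simple i)) := by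
        rw [hyy']
        exact hTactmul y' (cs.simple i)
          (by rw [← hyy', cs.length_simple, ← hd'])
      have ihy' := fun z => ih (cs.length y') hlt y' rfl z
      obtain ⟨h1, h2, h3, h4⟩ := hTacts i z
      obtain ⟨r1, r2, r3, r4⟩ := hP.2 i y hd z
      have hξmul : ∀ (c : LaurentPolynomial ℤ) (m : Mo), ξ (Tact y' (c • m)) = c * ξ (Tact y' m) := by
        intro c m; rw [map_smul, map_smul, smul_eq_mul]
      by_cases hc : cs.simple i * z.1 = z.1 * st (cs.simple i)
      · have hzi := key1 st z.1 i z.2 hc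
        rcases cs.length_simple_mul z.1 i with hl | hl
        · rw [r1 hc (by omega) hzi, hmul]
          simp only [LinearMap.coe_comp, Function.comp_apply,
            h1 hc (by omega) hzi, map_add, hξmul,
            map_add, map_mul, Polynomial.toLaurent_X, Polynomial.toLaurent_one,
            ← hy', ← ihy']
        · rw [r2 hc (by omega) hzi, hmul]
          simp only [LinearMap.coe_comp, Function.comp_apply,
            h2 hc (by omega) hzi, map_add, hξmul,
            map_add, map_sub, map_mul, map_pow, Polynomial.toLaurent_X,
            Polynomial.toLaurent_one, ← hy', ← ihy']
      · have hzi := key2 z.1 i z.2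
        rcases cs.length_simple_mul z.1 i with hl | hl
        · rw [r3 hc (by omega) hzi, hmul]
          simp only [LinearMap.coe_comp, Function.comp_apply,
            h3 hc (by omega) hzi, ← hy', ← ihy']
        · rw [r4 hc (by omega) hzi, hmul]
          simp only [LinearMap.coe_comp, Function.comp_apply,
            h4 hc (by omega) hzi, map_add, hξmul,
            map_add, map_sub, map_mul, map_pow, Polynomial.toLaurent_X,
            Polynomial.toLaurent_one, ← hy', ← ihy']
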